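/- Let ε > 0, let x₁, …, x_{m+n} ∈ ℝ^D, and let x_{m+n+1}, …, x_{m+n+ℓ} ∈ ℝ^D be additional points. Define q_ε(x) = Σ_{i=1}^{m+n} k_ε(x, x_i), the matrix W ∈ ℝ^{(m+n)×(m+n)} by W_{ij} = k_ε(x_i,x_j)/(q_ε(x_i)q_ε(x_j)), D diagonal with D_{ii} = Σ_j W_{ij}, A = D⁻¹W, L = (A − I)/ε², and the extension matrix E ∈ ℝ^{(m+n+ℓ)×(m+n)} by E_{ij} = [k_ε(x_i,x_j)/(q_ε(x_i)q_ε(x_j))] / (Σ_{j'=1}^{m+n} k_ε(x_i,x_{j'})/(q_ε(x_i)q_ε(x_{j'}))) for 1 ≤ i ≤ m+n+ℓ and 1 ≤ j ≤ m+n. If ṽ ∈ ℝ^{m+n} satisfies −Lṽ = μṽ with ε²μ ≠ 1, then for every 1 ≤ j ≤ m+n, (1/(1−ε²μ)) (Eṽ)(j) = ṽ(j). -/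
import Mathlib


open MeasureTheory

noncomputable section

/-- The Gaussian-like kernel `k_ε(x,y) = exp(-‖x-y‖²/(4ε²))`. -/
def gaussKer {D : ℕ} (ε : ℝ) (x y : EuclideanSpace ℝ (Fin D)) : ℝ :=
  Real.exp (-‖x - y‖ ^ 2 / (4 * ε ^ 2))

/-- The empirical degree `q_ε(x) = Σ_i k_ε(x, x_i)` of a point with respect to sample points. -/
def qDeg {D N : ℕ} (ε : ℝ) (x : Fin N → EuclideanSpace ℝ (Fin D))
    (p : EuclideanSpace ℝ (Fin D)) : ℝ :=
  ∑ i, gaussKer ε p (x i)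

/-- The kernel-normalized affinity matrix `W_{ij} = k_ε(x_i,x_j)/(q_ε(x_i) q_ε(x_j))`. -/
def Wmat {D N : ℕ} (ε : ℝ) (x : Fin N → EuclideanSpace ℝ (Fin D)) :
    Matrix (Fin N) (Fin N) ℝ :=
  Matrix.of fun i j => gaussKer ε (x i) (x j) / (qDeg ε x (x i) * qDeg ε x (x j))

/-- The row-stochastic matrix `A = D⁻¹ W` where `D_{ii} = Σ_j W_{ij}`. -/
def Amat {D N : ℕ} (ε : ℝ) (x : Fin N → EuclideanSpace ℝ (Fin D)) :
    Matrix (Fin N) (Fin N) ℝ :=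
  Matrix.of fun i j => Wmat ε x i j / ∑ l, Wmat ε x i l

/-- The kernel-normalized graph Laplacian `L = (A - I)/ε²`. -/
def Lmat {D N : ℕ} (ε : ℝ) (x : Fin N → EuclideanSpace ℝ (Fin D)) :
    Matrix (Fin N) (Fin N) ℝ :=
  (1 / ε ^ 2) • (Amat ε x - 1)

/-- The Nyström extension matrix `E ∈ ℝ^{(m+n+ℓ)×(m+n)}` built from the original `m+n` points
(the first `m+n` coordinates of `x`) and `ℓ` additional points. -/
def extMat {D m n ℓ : ℕ} (ε : ℝ) (x : Fin (m + n + ℓ) → EuclideanSpace ℝ (Fin D)) :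
    Matrix (Fin (m + n + ℓ)) (Fin (m + n)) ℝ :=
  Matrix.of fun i j =>
    (gaussKer ε (x i) (x (Fin.castAdd ℓ j)) /
      (qDeg ε (fun j' : Fin (m + n) => x (Fin.castAdd ℓ j')) (x i) *
        qDeg ε (fun j' : Fin (m + n) => x (Fin.castAdd ℓ j')) (x (Fin.castAdd ℓ j)))) /
    ∑ j' : Fin (m + n),
      gaussKer ε (x i) (x (Fin.castAdd ℓ j')) /
        (qDeg ε (fun j'' : Fin (m + n) => x (Fin.castAdd ℓ j'')) (x i) *
          qDeg ε (fun j'' : Fin (m + n) => x (Fin.castAdd ℓ j'')) (x (Fin.castAdd ℓ j')))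

/-- If `ṽ` is an eigenvector of `-L` with eigenvalue `μ` and `ε²μ ≠ 1`, then
`(1/(1-ε²μ)) E ṽ` agrees with `ṽ` on the original points. -/
theorem stmt8 {D m n ℓ : ℕ} (ε : ℝ) (hε : 0 < ε)
    (x : Fin (m + n + ℓ) → EuclideanSpace ℝ (Fin D))
    (μ : ℝ) (v : Fin (m + n) → ℝ)
    (hv : (-(Lmat ε (fun j : Fin (m + n) => x (Fin.castAdd ℓ j)))).mulVec v = μ • v)
    (hμ : ε ^ 2 * μ ≠ 1) :
    ∀ j : Fin (m + n),
      (1 / (1 - ε ^ 2 * μ)) * (extMat ε x).mulVec v (Fin.castAdd ℓ j) = v j := by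
  intro j
  set y : Fin (m + n) → EuclideanSpace ℝ (Fin D) := fun j => x (Fin.castAdd ℓ j) with hy
  have hε2 : (ε : ℝ) ^ 2 ≠ 0 := by positivity
  have h2 : (Lmat ε y).mulVec v = (-μ) • v := by
    have := congrArg Neg.neg hv
    simpa [Matrix.neg_mulVec, neg_smul, neg_neg] using this
  have h3 : ((Amat ε y) - 1).mulVec v = (-(ε ^ 2 * μ)) • v := by
    have h4 := congrArg (fun w => (ε ^ 2 : ℝ) • w) h2
    simp only [Lmat, Matrix.smul_mulVec, smul_smul] at h4
    rw [mul_one_div, div_self hε2, one_smul] at h4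
    rw [h4]
    ext i
    simp [mul_comm]
  have hA : (Amat ε y).mulVec v = (1 - ε ^ 2 * μ) • v := by
    have h5 : (Amat ε y).mulVec v - v = (-(ε ^ 2 * μ)) • v := by
      simpa [Matrix.sub_mulVec, Matrix.one_mulVec] using h3
    have := congrArg (fun w => w + v) h5
    simp only [sub_add_cancel] at this
    rw [this]
    ext i
    simp [sub_mul]
    ring
  have hE : (extMat ε x).mulVec v (Fin.castAdd ℓ j) = (Amat ε y).mulVec v j := rfl
  rw [hE, hA]
  have hne : (1 : ℝ) - ε ^ 2 * μ ≠ 0 := sub_ne_zero.mpr (Ne.symm hμ)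
  simp [Pi.smul_apply, smul_eq_mul]
  field_simp
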